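/- Let X and Y be Banach spaces and let u ∈ INA_π(X⊗̂_πY) be witnessed by a finite positive Borel measure μ on B_X×B_Y. If μ' is another finite positive Borel measure on B_X×B_Y with μ' ≪ μ (absolutely continuous), then the Bochner integral u' = ∫_{B_X×B_Y} x⊗y dμ'(x,y) is well-defined and u' ∈ INA_π(X⊗̂_πY), witnessed by μ'. -/

import Mathlib

open MeasureTheory Metric Set Filter TopologicalSpace

noncomputable section

variable {𝕜 : Type*} [RCLike 𝕜]
variable {X : Type*} [NormedAddCommGroup X] [NormedSpace 𝕜 X]
variable {Y : Type*} [NormedAddCommGroup Y] [NormedSpace 𝕜 Y]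
variable {T : Type*} [NormedAddCommGroup T] [NormedSpace 𝕜 T]
variable [NormedSpace ℝ T] [IsScalarTower ℝ 𝕜 T]

/-- `T`, together with the continuous bilinear map `tmul`, is a realization of the
projective tensor product `X ⊗̂_π Y`: it is complete, the span of elementary tensors
`x ⊗ y = tmul x y` is dense, and on that span the norm is the projective norm. -/
structure IsProjTensor (tmul : X →L[𝕜] Y →L[𝕜] T) : Prop where
  complete : CompleteSpace T
  dense_span :
    Dense ((Submodule.span 𝕜 (Set.range fun p : X × Y => tmul p.1 p.2) : Submodule 𝕜 T) : Set T)
  norm_eq : ∀ z : T,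
    z ∈ Submodule.span 𝕜 (Set.range fun p : X × Y => tmul p.1 p.2) →
    ‖z‖ = sInf { c : ℝ | ∃ (m : ℕ) (x : Fin m → X) (y : Fin m → Y),
      z = ∑ i, tmul (x i) (y i) ∧ c = ∑ i, ‖x i‖ * ‖y i‖ }

/-- `u` attains its projective norm (`u ∈ NA_π(X ⊗̂_π Y)`): it admits a representation
`u = ∑ λ_n x_n ⊗ y_n` with `x_n ∈ B_X`, `y_n ∈ B_Y`, `λ_n ≥ 0` and `∑ λ_n = ‖u‖_π`. -/
def NApi (tmul : X →L[𝕜] Y →L[𝕜] T) (u : T) : Prop :=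
  ∃ (x : ℕ → X) (y : ℕ → Y) (l : ℕ → ℝ),
    (∀ n, ‖x n‖ ≤ 1) ∧ (∀ n, ‖y n‖ ≤ 1) ∧ (∀ n, 0 ≤ l n) ∧
    HasSum (fun n => (l n : 𝕜) • tmul (x n) (y n)) u ∧ HasSum l ‖u‖

/-- `u` is finitely norm-attaining (`u ∈ FNA_π(X ⊗̂_π Y)`): it admits a finite optimal
representation `u = ∑_{k<m} x_k ⊗ y_k` with `∑_{k<m} ‖x_k‖‖y_k‖ = ‖u‖_π`. -/
def FNApi (tmul : X →L[𝕜] Y →L[𝕜] T) (u : T) : Prop :=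
  ∃ (m : ℕ) (x : Fin m → X) (y : Fin m → Y),
    u = ∑ i, tmul (x i) (y i) ∧ ∑ i, ‖x i‖ * ‖y i‖ = ‖u‖

/-- `u` is an integral projective norm-attaining tensor witnessed by `μ`: `μ` is a finite
positive Borel measure concentrated on `B_X × B_Y`, the map `(x, y) ↦ x ⊗ y` is
`μ`-Bochner integrable, `u = ∫ x ⊗ y ∂μ` and `‖μ‖ = ‖u‖_π`. -/
def INApiWitness [MeasurableSpace X] [MeasurableSpace Y]
    (tmul : X →L[𝕜] Y →L[𝕜] T) (u : T) (μ : Measure (X × Y)) : Prop :=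
  IsFiniteMeasure μ ∧
  μ ((closedBall (0 : X) 1 ×ˢ closedBall (0 : Y) 1)ᶜ) = 0 ∧
  Integrable (fun p : X × Y => tmul p.1 p.2) μ ∧
  u = ∫ p, tmul p.1 p.2 ∂μ ∧
  (μ Set.univ).toReal = ‖u‖

/-- `u ∈ INA_π(X ⊗̂_π Y)`: `u` is an integral projective norm-attaining tensor. -/
def INApi [MeasurableSpace X] [MeasurableSpace Y]
    (tmul : X →L[𝕜] Y →L[𝕜] T) (u : T) : Prop :=
  ∃ μ : Measure (X × Y), INApiWitness tmul u μ


/-- Corollary 2.5: integral norm attainment passes to absolutely continuous measures. -/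
theorem stmt_1 [CompleteSpace X] [CompleteSpace Y]
    [MeasurableSpace X] [BorelSpace X] [MeasurableSpace Y] [BorelSpace Y]
    (tmul : X →L[𝕜] Y →L[𝕜] T) (hT : IsProjTensor tmul)
    (u : T) (μ : Measure (X × Y)) (hμ : INApiWitness tmul u μ)
    (μ' : Measure (X × Y)) [IsFiniteMeasure μ'] (hac : μ' ≪ μ) :
    Integrable (fun p : X × Y => tmul p.1 p.2) μ' ∧
    INApiWitness tmul (∫ p, tmul p.1 p.2 ∂μ') μ' := by
  haveI := hT.complete
  obtain ⟨hfin, hball, hint, hu, hnorm⟩ := hμ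
  haveI := hfin
  -- elementary tensors have norm at most ‖x‖ * ‖y‖
  have htm : ∀ (x : X) (y : Y), ‖tmul x y‖ ≤ ‖x‖ * ‖y‖ := by
    intro x y
    have hmem : tmul x y ∈ Submodule.span 𝕜 (Set.range fun p : X × Y => tmul p.1 p.2) :=
      Submodule.subset_span ⟨(x, y), rfl⟩
    rw [hT.norm_eq _ hmem]
    apply csInf_le
    · refine ⟨0, ?_⟩
      rintro c ⟨m, xs, ys, -, rfl⟩
      positivity
    · exact ⟨1, ![x], ![y], by simp, by simp⟩
  have haemem : ∀ᵐ p ∂μ, p ∈ closedBall (0 : X) 1 ×ˢ closedBall (0 : Y) 1 := by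
    rw [ae_iff]
    exact hball
  have hb : ∀ᵐ p ∂μ, ‖tmul p.1 p.2‖ ≤ 1 := by
    filter_upwards [haemem] with p hp
    obtain ⟨hx, hy⟩ := hp
    calc ‖tmul p.1 p.2‖ ≤ ‖p.1‖ * ‖p.2‖ := htm _ _
      _ ≤ 1 := mul_le_one₀ (mem_closedBall_zero_iff.mp hx) (norm_nonneg _)
          (mem_closedBall_zero_iff.mp hy)
  have hb' : ∀ᵐ p ∂μ', ‖tmul p.1 p.2‖ ≤ 1 := hb.filter_mono hac.ae_le
  have hint' : Integrable (fun p : X × Y => tmul p.1 p.2) μ' := by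
    refine Integrable.mono' (integrable_const 1) (hint.aestronglyMeasurable.mono_ac hac) hb'
  refine ⟨hint', inferInstance, hac hball, hint', rfl, ?_⟩
  set u' := ∫ p, tmul p.1 p.2 ∂μ' with hu'
  -- upper bound
  have hup : ‖u'‖ ≤ (μ' Set.univ).toReal := by
    calc ‖u'‖ ≤ ∫ p, ‖tmul p.1 p.2‖ ∂μ' := norm_integral_le_integral_norm _
      _ ≤ ∫ _p, (1 : ℝ) ∂μ' := integral_mono_ae hint'.norm (integrable_const 1) hb'
      _ = (μ' Set.univ).toReal := by simp [measureReal_def]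
  -- norming functional
  obtain ⟨g, hg1, hgu⟩ := exists_dual_vector'' 𝕜 u
  have hgf_int : Integrable (fun p : X × Y => g (tmul p.1 p.2)) μ := g.integrable_comp hint
  have hre_int : Integrable (fun p : X × Y => RCLike.re (g (tmul p.1 p.2))) μ :=
    RCLike.reCLM.integrable_comp hgf_int
  have hgble : ∀ᵐ p ∂μ, RCLike.re (g (tmul p.1 p.2)) ≤ 1 := by
    filter_upwards [hb] with p hp
    calc RCLike.re (g (tmul p.1 p.2)) ≤ ‖g (tmul p.1 p.2)‖ := RCLike.re_le_norm _
      _ ≤ ‖g‖ * ‖tmul p.1 p.2‖ := g.le_opNorm _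
      _ ≤ 1 * 1 := by gcongr
      _ = 1 := one_mul 1
  have hre_eq : ∫ p, RCLike.re (g (tmul p.1 p.2)) ∂μ = ‖u‖ := by
    have h1 : ∫ p, g (tmul p.1 p.2) ∂μ = g u := by
      rw [hu]; exact ContinuousLinearMap.integral_comp_comm g hint
    have h2 : ∫ p, RCLike.re (g (tmul p.1 p.2)) ∂μ = RCLike.re (∫ p, g (tmul p.1 p.2) ∂μ) :=
      ContinuousLinearMap.integral_comp_comm RCLike.reCLM hgf_int
    rw [h2, h1, hgu]
    simp
  have hae1 : ∀ᵐ p ∂μ, RCLike.re (g (tmul p.1 p.2)) = 1 := by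
    have hnn : 0 ≤ᵐ[μ] fun p : X × Y => 1 - RCLike.re (g (tmul p.1 p.2)) := by
      filter_upwards [hgble] with p hp
      simpa using hp
    have hiz : ∫ p, (1 - RCLike.re (g (tmul p.1 p.2))) ∂μ = 0 := by
      rw [integral_sub (integrable_const 1) hre_int, hre_eq]
      simp [measureReal_def, hnorm]
    have := (integral_eq_zero_iff_of_nonneg_ae hnn ((integrable_const 1).sub hre_int)).mp hiz
    filter_upwards [this] with p hp
    have : (1 : ℝ) - RCLike.re (g (tmul p.1 p.2)) = 0 := hp
    linarith
  have hae1' : ∀ᵐ p ∂μ', RCLike.re (g (tmul p.1 p.2)) = 1 := hae1.filter_mono hac.ae_le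
  have hgf_int' : Integrable (fun p : X × Y => g (tmul p.1 p.2)) μ' := g.integrable_comp hint'
  have hre_eq' : RCLike.re (g u') = (μ' Set.univ).toReal := by
    have h1 : ∫ p, g (tmul p.1 p.2) ∂μ' = g u' :=
      ContinuousLinearMap.integral_comp_comm g hint'
    have h2 : ∫ p, RCLike.re (g (tmul p.1 p.2)) ∂μ' = RCLike.re (∫ p, g (tmul p.1 p.2) ∂μ') :=
      ContinuousLinearMap.integral_comp_comm RCLike.reCLM hgf_int'
    rw [← h1, ← h2, integral_congr_ae hae1']
    simp [measureReal_def]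
  have hlow : (μ' Set.univ).toReal ≤ ‖u'‖ := by
    calc (μ' Set.univ).toReal = RCLike.re (g u') := hre_eq'.symm
      _ ≤ ‖g u'‖ := RCLike.re_le_norm _
      _ ≤ ‖g‖ * ‖u'‖ := g.le_opNorm _
      _ ≤ 1 * ‖u'‖ := by gcongr
      _ = ‖u'‖ := one_mul _
  linarith
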